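/- Let 0 < t_1 < 1 and let L be an even positive integer. Define D_L = { π(2m-1)/L : m = -L/2+1, ..., L/2 } and, for y ∈ ℤ, s_±(y) = (1/L) ∑_{k ∈ D_L} e^{-i k y} / (1 + t_1 e^{± i k}). Then s_±(y) is real for all y, s_+(y) = s_-(-y), and s_±(y+L) = -s_±(y) (antiperiodicity), and |s_±(y)| ≤ C ρ^{|y|_L} for some constants C > 0, 0 < ρ < 1 depending only on t_1, where |y|_L = min over n ∈ ℤ of |y - nL| is the distance on ℤ_L (exponential decay uniform in L). -/

import Mathlib

section helpers

private lemma sumIcc' (f : ℤ → ℂ) (a : ℤ) (n : ℕ) :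
    ∑ m ∈ Finset.Icc a (a + n - 1), f m = ∑ j ∈ Finset.range n, f (a + j) := by
  apply Finset.sum_nbij' (fun m => (m - a).toNat) (fun j => a + j)
  · intro m hm; simp only [Finset.mem_Icc] at hm; simp only [Finset.mem_range]; omega
  · intro j hj; simp only [Finset.mem_range] at hj; simp only [Finset.mem_Icc]; omega
  · intro m hm; simp only [Finset.mem_Icc] at hm; omega
  · intro j hj; simp only [Finset.mem_range] at hj; omega
  · intro m hm; simp only [Finset.mem_Icc] at hm; congr 1; omega

private lemma negOneZpowNeg' (n : ℤ) : (-1 : ℂ) ^ (-n) = (-1) ^ n := by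
  rw [zpow_neg]
  rcases Int.even_or_odd n with h | h
  · rw [h.neg_one_zpow]; norm_num
  · rw [h.neg_one_zpow]; norm_num

private lemma orth' (L : ℕ) (hL : Even L) (hpos : 0 < L) (r : ℤ) :
    ∑ m ∈ Finset.Icc (-(L : ℤ) / 2 + 1) ((L : ℤ) / 2),
      Complex.exp (((Real.pi * (2 * (m : ℝ) - 1) / (L : ℝ) : ℝ) : ℂ) * r * Complex.I)
    = if (L : ℤ) ∣ r then (L : ℂ) * (-1 : ℂ) ^ (r / L) else 0 := by
  have hL0 : (L : ℂ) ≠ 0 := Nat.cast_ne_zero.mpr hpos.ne'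
  have hpi : (Real.pi : ℂ) ≠ 0 := Complex.ofReal_ne_zero.mpr Real.pi_ne_zero
  have hI : Complex.I ≠ 0 := Complex.I_ne_zero
  set a : ℤ := -(L : ℤ) / 2 + 1 with ha
  have hb : ((L : ℤ) / 2) = a + L - 1 := by
    obtain ⟨p, hp⟩ := hL
    subst hp; push_cast; omega
  set w : ℂ := 2 * Real.pi * r * Complex.I / L with hw
  set c : ℂ := -(Real.pi * r * Complex.I / L) with hc
  have hterm : ∀ m : ℤ, Complex.exp (((Real.pi * (2 * (m : ℝ) - 1) / (L : ℝ) : ℝ) : ℂ) * r * Complex.I)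
      = Complex.exp c * Complex.exp ((m : ℂ) * w) := by
    intro m
    rw [← Complex.exp_add]
    congr 1
    rw [hc, hw]
    push_cast
    apply mul_left_cancel₀ hL0
    field_simp
    ring
  rw [hb]
  simp only [hterm]
  rw [← Finset.mul_sum, sumIcc' (fun m => Complex.exp ((m : ℂ) * w)) a L]
  have hsplit : ∀ j : ℕ, Complex.exp (((a + (j:ℤ) : ℤ) : ℂ) * w)
      = Complex.exp ((a : ℂ) * w) * Complex.exp w ^ j := by
    intro j
    push_cast
    rw [add_mul, Complex.exp_add]
    congr 1
    exact Complex.exp_nat_mul w j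
  simp only [hsplit]
  rw [← Finset.mul_sum]
  by_cases hdvd : (L : ℤ) ∣ r
  · obtain ⟨n, rfl⟩ := hdvd
    have hwn : w = (n : ℂ) * (2 * Real.pi * Complex.I) := by
      rw [hw]; push_cast; field_simp
    have hew : Complex.exp w = 1 := by
      rw [hwn, Complex.exp_int_mul, Complex.exp_two_pi_mul_I, one_zpow]
    have hawc : Complex.exp ((a : ℂ) * w) = 1 := by
      rw [hwn, show (a : ℂ) * ((n : ℂ) * (2 * Real.pi * Complex.I))
          = ((a * n : ℤ) : ℂ) * (2 * Real.pi * Complex.I) by push_cast; ring]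
      rw [Complex.exp_int_mul, Complex.exp_two_pi_mul_I, one_zpow]
    have hcc : Complex.exp c = (-1 : ℂ) ^ n := by
      rw [hc, show -((Real.pi:ℂ) * (((L:ℤ) * n : ℤ):ℂ) * Complex.I / L)
          = ((-n : ℤ) : ℂ) * (Real.pi * Complex.I) by
        push_cast; apply mul_left_cancel₀ hL0; field_simp]
      rw [Complex.exp_int_mul, Complex.exp_pi_mul_I]
      exact negOneZpowNeg' n
    have hq : ((L : ℤ) * n) / (L : ℤ) = n := Int.mul_ediv_cancel_left n (by exact_mod_cast hpos.ne')
    simp only [hew, one_pow, Finset.sum_const, Finset.card_range, nsmul_eq_mul, mul_one]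
    rw [hawc, hcc, hq, if_pos ⟨n, rfl⟩]
    ring
  · have hew : Complex.exp w ≠ 1 := by
      intro h
      rw [Complex.exp_eq_one_iff] at h
      obtain ⟨k, hk⟩ := h
      apply hdvd
      refine ⟨k, ?_⟩
      rw [hw] at hk
      have h2 : (2 * (Real.pi:ℂ) * Complex.I) ≠ 0 := by simp [hpi, hI]
      field_simp at hk
      have : (r : ℂ) = (L:ℂ) * k := by
        apply mul_left_cancel₀ h2
        linear_combination (2 * (Real.pi:ℂ) * Complex.I) * hk
      exact_mod_cast this
    rw [geom_sum_eq hew]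
    have hewL : Complex.exp w ^ L = 1 := by
      rw [← Complex.exp_nat_mul]
      rw [show (L : ℂ) * w = (r : ℂ) * (2 * Real.pi * Complex.I) by rw [hw]; field_simp]
      rw [Complex.exp_int_mul, Complex.exp_two_pi_mul_I, one_zpow]
    rw [hewL, if_neg hdvd]
    simp

private lemma geo' (x : ℂ) (L : ℕ) : (1 - x) * ∑ j ∈ Finset.range L, x ^ j = 1 - x ^ L := by
  have h := geom_sum_mul x L
  linear_combination -h

end helpers

/-- The kernel `s_ω(y) = (1/L) ∑_{k ∈ D_L} e^{-iky}/(1 + t₁ e^{ω i k})`, where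
`D_L = {π(2m-1)/L : m = -L/2+1, …, L/2}` and `ω = ε = ±1`. -/
noncomputable def sOmega (t1 : ℝ) (L : ℕ) (ε : ℝ) (y : ℤ) : ℂ :=
  (1 / (L : ℂ)) *
    ∑ m ∈ Finset.Icc (-(L : ℤ) / 2 + 1) ((L : ℤ) / 2),
      Complex.exp (-Complex.I * ((Real.pi * (2 * (m : ℝ) - 1) / (L : ℝ) : ℝ) : ℂ) * (y : ℂ)) /
        (1 + (t1 : ℂ) *
          Complex.exp ((ε : ℂ) * Complex.I * ((Real.pi * (2 * (m : ℝ) - 1) / (L : ℝ) : ℝ) : ℂ)))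

private lemma sOmega_one_eq (t1 : ℝ) (h0 : 0 < t1) (L : ℕ) (hL : Even L) (hpos : 0 < L) (y : ℤ) :
    sOmega t1 L 1 y =
      (((-1 : ℝ) ^ (y / (L : ℤ)) * (-t1) ^ (y % (L : ℤ)).toNat / (1 + t1 ^ L) : ℝ) : ℂ) := by
  have hL0 : (L : ℂ) ≠ 0 := Nat.cast_ne_zero.mpr hpos.ne'
  have hLZ : (L : ℤ) ≠ 0 := by exact_mod_cast hpos.ne'
  have hLZpos : (0 : ℤ) < (L : ℤ) := by exact_mod_cast hpos
  have hdenR : (0 : ℝ) < 1 + t1 ^ L := by positivity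
  have hden : (1 + (t1 : ℂ) ^ L) ≠ 0 := by
    have h := Complex.ofReal_ne_zero.mpr hdenR.ne'
    push_cast at h; exact h
  unfold sOmega
  simp only [Complex.ofReal_one, one_mul]
  have key : ∀ m : ℤ,
      Complex.exp (-Complex.I * ((Real.pi * (2 * (m : ℝ) - 1) / (L : ℝ) : ℝ) : ℂ) * (y : ℂ)) /
        (1 + (t1 : ℂ) * Complex.exp (Complex.I * ((Real.pi * (2 * (m : ℝ) - 1) / (L : ℝ) : ℝ) : ℂ)))
      = (∑ j ∈ Finset.range L, (-(t1 : ℂ)) ^ j *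
          Complex.exp (((Real.pi * (2 * (m : ℝ) - 1) / (L : ℝ) : ℝ) : ℂ) * (((j : ℤ) - y : ℤ) : ℂ) * Complex.I))
        / (1 + (t1 : ℂ) ^ L) := by
    intro m
    set cm : ℂ := ((Real.pi * (2 * (m : ℝ) - 1) / (L : ℝ) : ℝ) : ℂ) with hcm
    have hLc : (L : ℂ) * cm = Real.pi * (2 * (m : ℂ) - 1) := by
      rw [hcm]; push_cast; field_simp
    have hxL : (-(t1 : ℂ) * Complex.exp (Complex.I * cm)) ^ L = -((t1 : ℂ) ^ L) := by
      rw [mul_pow, hL.neg_pow, ← Complex.exp_nat_mul]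
      rw [show (L : ℂ) * (Complex.I * cm) = ((2 * m - 1 : ℤ) : ℂ) * (↑Real.pi * Complex.I) by
        push_cast; linear_combination Complex.I * hLc]
      rw [Complex.exp_int_mul, Complex.exp_pi_mul_I]
      rw [Odd.neg_one_zpow ⟨m - 1, by ring⟩]
      ring
    have hgeo := geo' (-(t1 : ℂ) * Complex.exp (Complex.I * cm)) L
    have hds : (1 + (t1 : ℂ) * Complex.exp (Complex.I * cm)) *
        (∑ j ∈ Finset.range L, (-(t1 : ℂ) * Complex.exp (Complex.I * cm)) ^ j) = 1 + (t1 : ℂ) ^ L := by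
      linear_combination hgeo - hxL
    have hbne : (1 + (t1 : ℂ) * Complex.exp (Complex.I * cm)) ≠ 0 := by
      intro hb
      rw [hb, zero_mul] at hds
      exact hden hds.symm
    rw [div_eq_div_iff hbne hden]
    have hsum : (∑ j ∈ Finset.range L, (-(t1 : ℂ)) ^ j *
          Complex.exp (cm * (((j : ℤ) - y : ℤ) : ℂ) * Complex.I))
        = Complex.exp (-Complex.I * cm * y) *
          ∑ j ∈ Finset.range L, (-(t1 : ℂ) * Complex.exp (Complex.I * cm)) ^ j := by
      rw [Finset.mul_sum]
      refine Finset.sum_congr rfl fun j _ => ?_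
      rw [mul_pow, ← Complex.exp_nat_mul]
      rw [show cm * (((j : ℤ) - y : ℤ) : ℂ) * Complex.I =
          (-Complex.I * cm * y) + (j : ℂ) * (Complex.I * cm) by push_cast; ring]
      rw [Complex.exp_add]
      ring
    rw [hsum]
    linear_combination -Complex.exp (-Complex.I * cm * (y : ℂ)) * hds
  simp only [key]
  rw [← Finset.sum_div, Finset.sum_comm]
  have horth : ∀ j ∈ Finset.range L,
      (∑ m ∈ Finset.Icc (-(L : ℤ) / 2 + 1) ((L : ℤ) / 2), (-(t1 : ℂ)) ^ j *
        Complex.exp (((Real.pi * (2 * (m : ℝ) - 1) / (L : ℝ) : ℝ) : ℂ) * (((j : ℤ) - y : ℤ) : ℂ) * Complex.I))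
      = (-(t1 : ℂ)) ^ j *
        (if (L : ℤ) ∣ ((j : ℤ) - y) then (L : ℂ) * (-1 : ℂ) ^ (((j : ℤ) - y) / L) else 0) := by
    intro j _
    rw [← Finset.mul_sum, orth' L hL hpos ((j : ℤ) - y)]
  rw [Finset.sum_congr rfl horth]
  have h1 := Int.emod_nonneg y hLZ
  have h2 := Int.emod_lt_of_pos y hLZpos
  set j0 : ℕ := (y % (L : ℤ)).toNat with hj0
  have hj0mem : j0 ∈ Finset.range L := by
    simp only [Finset.mem_range]
    omega
  have hj0y : ((j0 : ℤ)) = y % (L : ℤ) := by omega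
  rw [Finset.sum_eq_single_of_mem j0 hj0mem ?side]
  case side =>
    intro j hj hne
    rw [if_neg, mul_zero]
    intro hdvd
    have hyd := Int.mul_ediv_add_emod y (L : ℤ)
    have hkey : ((j0 : ℤ) - y) = -((L : ℤ) * (y / (L : ℤ))) := by omega
    have hd2 : (L : ℤ) ∣ ((j0 : ℤ) - y) := ⟨-(y / (L : ℤ)), by rw [mul_neg]; exact hkey⟩
    have hd3 : (L : ℤ) ∣ ((j : ℤ) - (j0 : ℤ)) := by
      have := dvd_sub hdvd hd2
      simpa using this
    have hj' : j < L := Finset.mem_range.mp hj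
    have hz := Int.eq_zero_of_abs_lt_dvd hd3 (by
      rw [abs_lt]
      omega)
    omega
  have hyd := Int.mul_ediv_add_emod y (L : ℤ)
  have hkey : ((j0 : ℤ) - y) = -((L : ℤ) * (y / (L : ℤ))) := by omega
  have hdvd0 : (L : ℤ) ∣ ((j0 : ℤ) - y) := ⟨-(y / (L : ℤ)), by rw [mul_neg]; exact hkey⟩
  rw [if_pos hdvd0]
  have hdiveq : ((j0 : ℤ) - y) / (L : ℤ) = -(y / (L : ℤ)) := by
    rw [show ((j0 : ℤ) - y) = (L : ℤ) * (-(y / (L : ℤ))) from by rw [mul_neg]; exact hkey]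
    exact Int.mul_ediv_cancel_left _ hLZ
  rw [hdiveq, negOneZpowNeg']
  push_cast [Complex.ofReal_zpow]
  field_simp

private lemma absNegOneZpow (n : ℤ) : |(-1 : ℝ) ^ n| = 1 := by
  rcases Int.even_or_odd n with h | h
  · rw [h.neg_one_zpow, abs_one]
  · rw [h.neg_one_zpow, abs_neg, abs_one]

private lemma sOmega_neg_eq (t1 : ℝ) (L : ℕ) (hL : Even L) (y : ℤ) :
    sOmega t1 L (-1) y = sOmega t1 L 1 (-y) := by
  have hev : (L : ℤ) % 2 = 0 := by
    obtain ⟨p, hp⟩ := hL; subst hp; push_cast; omega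
  unfold sOmega
  congr 1
  apply Finset.sum_nbij' (fun m => 1 - m) (fun m => 1 - m)
  · intro m hm; simp only [Finset.mem_Icc] at hm ⊢; omega
  · intro m hm; simp only [Finset.mem_Icc] at hm ⊢; omega
  · intro m _; omega
  · intro m _; omega
  · intro m hm
    have hc : ((Real.pi * (2 * ((1 - m : ℤ) : ℝ) - 1) / (L : ℝ)) : ℝ)
        = -(Real.pi * (2 * (m : ℝ) - 1) / (L : ℝ)) := by push_cast; ring
    rw [hc]
    rw [Complex.ofReal_neg]
    congr 1
    · congr 1
      push_cast
      ring
    · congr 2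
      push_cast
      ring

private lemma sOmega_one_anti (t1 : ℝ) (h0 : 0 < t1) (L : ℕ) (hL : Even L) (hpos : 0 < L)
    (y : ℤ) : sOmega t1 L 1 (y + L) = -sOmega t1 L 1 y := by
  have hLZ : (L : ℤ) ≠ 0 := by positivity
  rw [sOmega_one_eq t1 h0 L hL hpos (y + L), sOmega_one_eq t1 h0 L hL hpos y]
  have hdiv : (y + (L : ℤ)) / (L : ℤ) = y / (L : ℤ) + 1 := by
    have := Int.add_mul_ediv_right y 1 hLZ
    simpa using this
  have hmod : (y + (L : ℤ)) % (L : ℤ) = y % (L : ℤ) := by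
    have := Int.add_mul_emod_self_right (a := y) (b := 1) (c := (L : ℤ))
    simpa using this
  rw [hdiv, hmod, zpow_add₀ (by norm_num : (-1 : ℝ) ≠ 0)]
  push_cast
  ring

/-- For `0 < t₁ < 1` and `L` a positive even integer: `s_±(y)` is real, `s₊(y) = s₋(-y)`,
`s_±(y+L) = -s_±(y)`, and `|s_±(y)| ≤ C ρ^{|y|_L}` where `|y|_L = min_{n ∈ ℤ} |y - nL|`
(stated as: for some `n`, `|s_±(y)| ≤ C ρ^{|y - nL|}`), with constants `C > 0`,
`0 < ρ < 1` depending only on `t₁`, uniformly in `L`. -/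
theorem sOmega_properties (t1 : ℝ) (h0 : 0 < t1) (h1 : t1 < 1) :
    (∀ L : ℕ, Even L → 0 < L → ∀ y : ℤ,
        (∀ ε : ℝ, ε = 1 ∨ ε = -1 →
          (sOmega t1 L ε y).im = 0 ∧ sOmega t1 L ε (y + L) = -sOmega t1 L ε y) ∧
        sOmega t1 L 1 y = sOmega t1 L (-1) (-y)) ∧
    (∃ C ρ : ℝ, 0 < C ∧ 0 < ρ ∧ ρ < 1 ∧
      ∀ L : ℕ, Even L → 0 < L → ∀ ε : ℝ, ε = 1 ∨ ε = -1 → ∀ y : ℤ,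
        ∃ n : ℤ, ‖sOmega t1 L ε y‖ ≤ C * ρ ^ (y - n * L).natAbs) := by
  have hdecay : ∀ (L : ℕ), Even L → 0 < L → ∀ z : ℤ,
      ‖sOmega t1 L 1 z‖ ≤ 1 * t1 ^ (z - (z / (L : ℤ)) * L).natAbs := by
    intro L hL hpos z
    have hLZ : (L : ℤ) ≠ 0 := by positivity
    have hdenR : (0 : ℝ) < 1 + t1 ^ L := by positivity
    rw [sOmega_one_eq t1 h0 L hL hpos z, Complex.norm_real, Real.norm_eq_abs]
    have hyd := Int.mul_ediv_add_emod z (L : ℤ)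
    have h1' := Int.emod_nonneg z hLZ
    have hnat : (z - (z / (L : ℤ)) * L).natAbs = (z % (L : ℤ)).toNat := by
      rw [mul_comm]
      omega
    rw [hnat, one_mul]
    rw [abs_div, abs_mul, absNegOneZpow, one_mul, abs_pow, abs_neg,
      abs_of_pos h0, abs_of_pos hdenR]
    exact div_le_self (by positivity) (by nlinarith [pow_pos h0 L])
  constructor
  · intro L hL hpos y
    constructor
    · intro ε hε
      rcases hε with rfl | rfl
      · exact ⟨by rw [sOmega_one_eq t1 h0 L hL hpos y]; exact Complex.ofReal_im _,
          sOmega_one_anti t1 h0 L hL hpos y⟩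
      · constructor
        · rw [sOmega_neg_eq t1 L hL, sOmega_one_eq t1 h0 L hL hpos (-y)]
          exact Complex.ofReal_im _
        · rw [sOmega_neg_eq t1 L hL, sOmega_neg_eq t1 L hL]
          have h := sOmega_one_anti t1 h0 L hL hpos (-y - L)
          rw [show (-y - (L : ℤ)) + L = -y from by ring] at h
          rw [show -(y + (L : ℤ)) = -y - L from by ring, h, neg_neg]
    · rw [sOmega_neg_eq t1 L hL, neg_neg]
  · refine ⟨1, t1, one_pos, h0, h1, ?_⟩
    intro L hL hpos ε hε y
    have hLZ : (L : ℤ) ≠ 0 := by positivity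
    rcases hε with rfl | rfl
    · exact ⟨y / (L : ℤ), hdecay L hL hpos y⟩
    · refine ⟨-((-y) / (L : ℤ)), ?_⟩
      rw [sOmega_neg_eq t1 L hL]
      have h := hdecay L hL hpos (-y)
      have hnat : (y - -((-y) / (L : ℤ)) * L).natAbs = ((-y) - ((-y) / (L : ℤ)) * L).natAbs := by
        rw [neg_mul]
        omega
      rw [hnat]
      exact h
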